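/- Consider mechanism M4 (full information, proportional allocation, continuous action space) with N ≥ 2 users, reward R > 0, cost parameter c > 0, and types q_i ∈ (0,1]. Then there exists a pure Nash equilibrium: a profile x with x_i ∈ [0, q_i] for all i such that for every user i and every alternative action y ∈ [0, q_i], replacing x_i by y does not strictly increase user i's utility. -/

import Mathlib

open Finset

/-- Utility in mechanism M4 (proportional allocation, continuous action space):
`u_i(x) = R * x i / (∑ j, x j) - c * x i / q i` if `∑ j, x j > 0`, and `0`
if all contributions are zero. -/
noncomputable def utilM4 {N : ℕ} (R c : ℝ) (q x : Fin N → ℝ) (i : Fin N) : ℝ :=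
  if 0 < ∑ j, x j then R * x i / (∑ j, x j) - c * x i / q i else 0

/-- Pure Nash equilibrium of mechanism M4: every action lies in `[0, q i]` and
no user can strictly increase her utility by unilaterally changing her own
action within `[0, q i]`. -/
noncomputable def isPNE_M4 {N : ℕ} (R c : ℝ) (q : Fin N → ℝ) (x : Fin N → ℝ) : Prop :=
  (∀ i, x i ∈ Set.Icc 0 (q i)) ∧
  ∀ i, ∀ y ∈ Set.Icc 0 (q i),
    utilM4 R c q (Function.update x i y) i ≤ utilM4 R c q x i

set_option maxHeartbeats 1000000 in
theorem stmt_5 (N : ℕ) (hN : 2 ≤ N) (R c : ℝ) (hR : 0 < R) (hc : 0 < c)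
    (q : Fin N → ℝ) (hq1 : ∀ i, q i ≤ 1) (hq0 : ∀ i, 0 < q i) :
    ∃ x : Fin N → ℝ, isPNE_M4 R c q x := by
  classical
  set a : Fin N → ℝ := fun i => c / q i with ha
  have ha0 : ∀ i, 0 < a i := fun i => div_pos hc (hq0 i)
  have hNe : (Finset.univ : Finset (Fin N)).Nonempty :=
    ⟨⟨0, by omega⟩, Finset.mem_univ _⟩
  set g : ℝ → Fin N → ℝ :=
    fun S i => min (q i) (max 0 (S * (1 - a i * S / R))) with hg
  set φ : ℝ → ℝ := fun S => ∑ i, g S i with hφ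
  set S0 : ℝ := Finset.univ.inf' hNe (fun i => min (q i) (R / (2 * a i))) with hS0
  have hS0pos : 0 < S0 := by
    rw [hS0, Finset.lt_inf'_iff]
    intro i _
    exact lt_min (hq0 i) (div_pos hR (mul_pos two_pos (ha0 i)))
  have hS0le : ∀ i : Fin N, S0 ≤ q i ∧ S0 ≤ R / (2 * a i) := by
    intro i
    constructor
    · exact le_trans (Finset.inf'_le _ (Finset.mem_univ i)) (min_le_left _ _)
    · exact le_trans (Finset.inf'_le _ (Finset.mem_univ i)) (min_le_right _ _)
  set S1 : ℝ := Finset.univ.sup' hNe (fun i => R / a i) with hS1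
  have hS1ge : ∀ i : Fin N, R / a i ≤ S1 := by
    intro i
    rw [hS1]
    exact Finset.le_sup' (fun i => R / a i) (Finset.mem_univ i)
  have hS1pos : 0 < S1 :=
    lt_of_lt_of_le (div_pos hR (ha0 ⟨0, by omega⟩)) (hS1ge _)
  have hS01 : S0 ≤ S1 := by
    have h1 := (hS0le ⟨0, by omega⟩).2
    have h2 := hS1ge ⟨0, by omega⟩
    have h3 : R / (2 * a ⟨0, by omega⟩) ≤ R / a ⟨0, by omega⟩ := by
      apply div_le_div_of_nonneg_left hR.le (ha0 _)
      nlinarith [ha0 (⟨0, by omega⟩ : Fin N)]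
    linarith
  have hcont : Continuous φ := by
    apply continuous_finset_sum
    intro i _
    apply Continuous.min continuous_const
    apply Continuous.max continuous_const
    fun_prop
  -- φ S0 ≥ S0
  have hφS0 : S0 ≤ φ S0 := by
    have hbound : ∀ i : Fin N, S0 / 2 ≤ g S0 i := by
      intro i
      have h1 : a i * S0 ≤ R / 2 := by
        have := (hS0le i).2
        have h2 : 0 < 2 * a i := mul_pos two_pos (ha0 i)
        rw [le_div_iff₀ h2] at this
        nlinarith
      have ht : S0 / 2 ≤ S0 * (1 - a i * S0 / R) := by
        have : a i * S0 / R ≤ 1 / 2 := by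
          rw [div_le_div_iff₀ hR (by norm_num)]
          linarith
        nlinarith
      refine le_min (by linarith [(hS0le i).1]) (le_trans ht (le_max_right _ _))
    calc S0 ≤ (N : ℝ) * (S0 / 2) := by
            have : (2 : ℝ) ≤ (N : ℝ) := by exact_mod_cast hN
            nlinarith
      _ ≤ ∑ i, g S0 i := by
            have hc1 : ∑ _i : Fin N, S0 / 2 = (N : ℝ) * (S0 / 2) := by
              rw [Finset.sum_const, nsmul_eq_mul, Finset.card_univ, Fintype.card_fin]
            rw [← hc1]
            exact Finset.sum_le_sum (fun i _ => hbound i)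
      _ = φ S0 := rfl
  have hφS1 : φ S1 ≤ S1 := by
    have hbound : ∀ i : Fin N, g S1 i ≤ 0 := by
      intro i
      have h1 : R ≤ a i * S1 := by
        have := hS1ge i
        rw [div_le_iff₀ (ha0 i)] at this
        linarith
      have ht : S1 * (1 - a i * S1 / R) ≤ 0 := by
        apply mul_nonpos_of_nonneg_of_nonpos hS1pos.le
        have : 1 ≤ a i * S1 / R := by rw [le_div_iff₀ hR]; linarith
        linarith
      calc g S1 i ≤ max 0 (S1 * (1 - a i * S1 / R)) := min_le_right _ _
        _ ≤ 0 := max_le le_rfl ht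
    calc φ S1 ≤ ∑ _i : Fin N, (0:ℝ) := Finset.sum_le_sum (fun i _ => hbound i)
      _ = 0 := by simp
      _ ≤ S1 := hS1pos.le
  -- IVT
  obtain ⟨S, hSmem, hSfix⟩ :
      ∃ S ∈ Set.Icc S0 S1, φ S - S = 0 := by
    have hc2 : ContinuousOn (fun S => φ S - S) (Set.Icc S0 S1) :=
      (hcont.sub continuous_id).continuousOn
    have := intermediate_value_Icc' hS01 hc2
    have h0 : (0:ℝ) ∈ Set.Icc (φ S1 - S1) (φ S0 - S0) :=
      ⟨by linarith, by linarith⟩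
    obtain ⟨S, hS, hSeq⟩ := this h0
    exact ⟨S, hS, hSeq⟩
  have hSpos : 0 < S := lt_of_lt_of_le hS0pos hSmem.1
  set x : Fin N → ℝ := g S with hx
  have hxsum : ∑ j, x j = S := by
    have : φ S = S := by linarith
    simpa [hφ] using this
  have hx0 : ∀ i, 0 ≤ x i := fun i =>
    le_min (hq0 i).le (le_max_left _ _)
  have hxq : ∀ i, x i ≤ q i := fun i => min_le_left _ _
  have hxlt : ∀ i, x i < S := by
    intro i
    calc x i ≤ max 0 (S * (1 - a i * S / R)) := min_le_right _ _
      _ < S := by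
          apply max_lt hSpos
          have : 0 < a i * S / R := div_pos (mul_pos (ha0 i) hSpos) hR
          nlinarith
  refine ⟨x, fun i => ⟨hx0 i, hxq i⟩, ?_⟩
  intro i y hy
  obtain ⟨hy0, hyq⟩ := hy
  set s : ℝ := S - x i with hs
  have hspos : 0 < s := by have := hxlt i; simp [hs]; linarith
  have hsum_erase : ∑ j ∈ Finset.univ.erase i, x j = s := by
    have := Finset.add_sum_erase Finset.univ x (Finset.mem_univ i)
    rw [hxsum] at this
    linarith
  have hupd : ∑ j, Function.update x i y j = y + s := by
    rw [Finset.sum_update_of_mem (Finset.mem_univ i), ← Finset.erase_eq, hsum_erase]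
  have hupd_pos : 0 < ∑ j, Function.update x i y j := by rw [hupd]; linarith
  have hsum_pos : 0 < ∑ j, x j := by rw [hxsum]; exact hSpos
  rw [utilM4, utilM4, if_pos hupd_pos, if_pos hsum_pos, hupd, hxsum,
    Function.update_self]
  -- reduce c / q i to a i
  have hca : ∀ z : ℝ, c * z / q i = a i * z := by
    intro z; rw [ha]; field_simp
  rw [hca, hca]
  have hSx : x i + s = S := by rw [hs]; ring
  have hq0i := hq0 i
  have hai := ha0 i
  set t : ℝ := S * (1 - a i * S / R) with htdef
  have hxi : x i = min (q i) (max 0 t) := rfl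
  have hDy : 0 < y + s := by linarith
  have hDx : 0 < x i + s := by linarith [hx0 i]
  -- key inequality
  rw [← hSx]
  have key : (R * y - a i * y * (y + s)) * (x i + s) ≤
      (R * x i - a i * x i * (x i + s)) * (y + s) := by
    rcases le_or_gt t 0 with h | h
    · have hx0' : x i = 0 := by
        rw [hxi, max_eq_left h, min_eq_right hq0i.le]
      have hRa : R ≤ a i * S := by
        by_contra hcon
        push_neg at hcon
        have : 0 < 1 - a i * S / R := by
          rw [sub_pos, div_lt_one hR]; linarith
        nlinarith
      have hsS : s = S := by rw [hs, hx0']; ring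
      rw [hx0', hsS]
      nlinarith [mul_nonneg hy0 hSpos.le, mul_nonneg (mul_nonneg hy0 hy0) hai.le,
        mul_nonneg hy0 (mul_nonneg hai.le hSpos.le)]
    · rcases le_or_gt (q i) t with h2 | h2
      · have hx' : x i = q i := by rw [hxi, max_eq_right h.le, min_eq_left h2]
        have hyx : y ≤ x i := by rw [hx']; exact hyq
        have hRs : a i * S ^ 2 ≤ R * s := by
          have ht2 : x i ≤ t := by rw [hx']; exact h2
          have : R * t = R * S - a i * S ^ 2 := by
            rw [htdef]; field_simp
          nlinarith
        have hys : y + s ≤ S := by linarith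
        nlinarith [mul_nonneg (sub_nonneg.mpr hyx) hai.le,
          mul_pos hDy hDx, mul_nonneg (mul_nonneg (sub_nonneg.mpr hyx) hai.le) hDy.le,
          mul_nonneg (mul_nonneg (sub_nonneg.mpr hyx) hai.le) (sub_nonneg.mpr hys)]
      · have hx' : x i = t := by rw [hxi, max_eq_right h.le, min_eq_right h2.le]
        have hRs : R * s = a i * S ^ 2 := by
          have : R * t = R * S - a i * S ^ 2 := by
            rw [htdef]; field_simp
          rw [hs, hx', mul_sub]
          linarith
        have hRs' : R * s = a i * (x i + s) ^ 2 := by rw [hSx]; exact hRs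
        have h5 : R * s - a i * (x i + s) * (y + s) = a i * (x i + s) * (x i - y) := by
          linear_combination hRs'
        have h6 : (x i - y) * (R * s - a i * (x i + s) * (y + s)) =
            a i * (x i + s) * (x i - y) ^ 2 := by rw [h5]; ring
        nlinarith [h6, mul_nonneg (mul_nonneg hai.le hDx.le) (sq_nonneg (x i - y))]
  have e1 : R * y / (y + s) - a i * y = (R * y - a i * y * (y + s)) / (y + s) := by
    field_simp
  have e2 : R * x i / (x i + s) - a i * x i =
      (R * x i - a i * x i * (x i + s)) / (x i + s) := by
    field_simp
  rw [e1, e2, div_le_div_iff₀ hDy hDx]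
  exact key
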